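/- arXiv:1911.02235 — 2 statements merged into one kernel-verified Lean document; each statement's English description precedes it below -/
import Mathlib

section
/- Any algorithm computing all partial sums a_i = Σ_{j ⪰ i} q_j for i ∈ {0,1}^n using only additions of the inputs q_j (each a_i directly a sum in which each required addend is used exactly once, i.e., a 'direct' addition-only algorithm) requires at least n·2^(n-1) additions. -/
open Finset

def Aset (n i : ℕ) : Finset ℕ := (Finset.range (2 ^ n)).filter (fun j => i &&& j = i)

lemma mem_Aset {n i j : ℕ} : j ∈ Aset n i ↔ j < 2 ^ n ∧ i &&& j = i := by
  simp [Aset, and_comm]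

lemma land_add_pow {k i : ℕ} (hi : i < 2 ^ k) (j : ℕ) : i &&& (j + 2 ^ k) = i &&& j := by
  apply Nat.eq_of_testBit_eq
  intro b
  simp only [Nat.testBit_and]
  rcases lt_trichotomy b k with h | h | h
  · rw [show j + 2 ^ k = 2 ^ k + j by omega, Nat.testBit_two_pow_add_gt h]
  · subst h
    rw [Nat.testBit_lt_two_pow hi]
    simp
  · have hb : i.testBit b = false :=
      Nat.testBit_lt_two_pow (lt_of_lt_of_le hi (Nat.pow_le_pow_right (by norm_num) h.le))
    simp [hb]

lemma pow_add_land {k i j : ℕ} (hi : i < 2 ^ k) (hj : j < 2 ^ k) :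
    (i + 2 ^ k) &&& (j + 2 ^ k) = (i &&& j) + 2 ^ k := by
  have hij : i &&& j < 2 ^ k := lt_of_le_of_lt Nat.and_le_left hi
  apply Nat.eq_of_testBit_eq
  intro b
  rw [Nat.testBit_and]
  rcases lt_trichotomy b k with h | h | h
  · rw [show i + 2 ^ k = 2 ^ k + i by omega, show j + 2 ^ k = 2 ^ k + j by omega,
      show (i &&& j) + 2 ^ k = 2 ^ k + (i &&& j) by omega,
      Nat.testBit_two_pow_add_gt h, Nat.testBit_two_pow_add_gt h, Nat.testBit_two_pow_add_gt h,
      Nat.testBit_and]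
  · rw [h]
    rw [show i + 2 ^ k = 2 ^ k + i by omega, show j + 2 ^ k = 2 ^ k + j by omega,
      show (i &&& j) + 2 ^ k = 2 ^ k + (i &&& j) by omega,
      Nat.testBit_two_pow_add_eq, Nat.testBit_two_pow_add_eq, Nat.testBit_two_pow_add_eq,
      Nat.testBit_lt_two_pow hi, Nat.testBit_lt_two_pow hj, Nat.testBit_lt_two_pow hij]
    simp
  · have hp : 2 ^ (k + 1) ≤ 2 ^ b := Nat.pow_le_pow_right (by norm_num) h
    have hps : 2 ^ (k + 1) = 2 ^ k * 2 := pow_succ 2 k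
    rw [Nat.testBit_lt_two_pow (by omega : i + 2 ^ k < 2 ^ b),
      Nat.testBit_lt_two_pow (by omega : j + 2 ^ k < 2 ^ b),
      Nat.testBit_lt_two_pow (by omega : (i &&& j) + 2 ^ k < 2 ^ b)]
    simp

lemma Aset_inter_low {k i : ℕ} (hi : i < 2 ^ k) :
    Aset (k + 1) i ∩ Finset.range (2 ^ k) = Aset k i := by
  have hlt : 2 ^ k < 2 ^ (k + 1) := Nat.pow_lt_pow_right one_lt_two (lt_add_one k)
  ext j
  simp only [Finset.mem_inter, mem_Aset, Finset.mem_range]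
  constructor
  · rintro ⟨⟨_, h2⟩, h3⟩; exact ⟨h3, h2⟩
  · rintro ⟨h1, h2⟩; exact ⟨⟨by omega, h2⟩, h1⟩

lemma Aset_upper_inter {k i : ℕ} :
    Aset (k + 1) (i + 2 ^ k) ∩ Finset.range (2 ^ k) = ∅ := by
  rw [Finset.eq_empty_iff_forall_notMem]
  intro j hj
  rw [Finset.mem_inter, mem_Aset, Finset.mem_range] at hj
  obtain ⟨⟨_, h2⟩, h3⟩ := hj
  have : i + 2 ^ k ≤ j := h2 ▸ Nat.and_le_right
  omega

lemma Aset_upper_image {k i : ℕ} (hi : i < 2 ^ k) :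
    (Aset (k + 1) (i + 2 ^ k)).image (· - 2 ^ k) = Aset k i := by
  have hps : 2 ^ (k + 1) = 2 ^ k * 2 := pow_succ 2 k
  ext j'
  simp only [Finset.mem_image, mem_Aset]
  constructor
  · rintro ⟨j, ⟨hj1, hj2⟩, rfl⟩
    have hge : i + 2 ^ k ≤ j := hj2 ▸ Nat.and_le_right
    have hlt : j - 2 ^ k < 2 ^ k := by omega
    refine ⟨hlt, ?_⟩
    have hj : j = (j - 2 ^ k) + 2 ^ k := by omega
    rw [hj, pow_add_land hi hlt] at hj2
    omega
  · rintro ⟨h1, h2⟩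
    exact ⟨j' + 2 ^ k, ⟨by omega, by rw [pow_add_land hi h1, h2]⟩, by omega⟩

lemma self_mem_Aset {n i : ℕ} (hi : i < 2 ^ n) : i ∈ Aset n i :=
  mem_Aset.mpr ⟨hi, Nat.and_self i⟩

lemma upper_mem_Aset {k i : ℕ} (hi : i < 2 ^ k) : i + 2 ^ k ∈ Aset (k + 1) i := by
  have hps : 2 ^ (k + 1) = 2 ^ k * 2 := pow_succ 2 k
  rw [mem_Aset]
  exact ⟨by omega, by rw [land_add_pow hi i, Nat.and_self]⟩

lemma Aset_antisymm {k i i' : ℕ} (hi : i < 2 ^ k) (hi' : i' < 2 ^ k)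
    (h1 : i' + 2 ^ k ∈ Aset (k + 1) i) (h2 : i + 2 ^ k ∈ Aset (k + 1) i') : i = i' := by
  rw [mem_Aset, land_add_pow hi i'] at h1
  rw [mem_Aset, land_add_pow hi' i] at h2
  have ha := h1.2
  have hb := h2.2
  rw [Nat.and_comm] at hb
  omega

lemma key : ∀ (n m : ℕ) (v : Fin m → Finset ℕ) (g : Fin m → Prop) (G : Finset (Fin m)),
    (∀ t, t ∈ G ↔ g t) →
    (∀ t, g t → ∃ s₁ s₂ : Fin m, s₁ < t ∧ s₂ < t ∧ (v s₁).Nonempty ∧ (v s₂).Nonempty ∧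
      Disjoint (v s₁) (v s₂) ∧ v t = v s₁ ∪ v s₂) →
    (∀ t, ¬ g t → v t = ∅ ∨ (∃ j, v t = {j}) ∨ ∃ s, s < t ∧ v t = v s) →
    (∀ i < 2 ^ n, ∃ t, v t = Aset n i) →
    n * 2 ^ (n - 1) ≤ G.card := by
  intro n
  induction n with
  | zero => intro m v g G _ _ _ _; simp
  | succ k ih =>
    intro m v g G hG hg hng hout
    classical
    have hps : 2 ^ (k + 1) = 2 ^ k * 2 := pow_succ 2 k
    choose s₁ s₂ hlt1 hlt2 hne1 hne2 hdis huni using hg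
    set Q : Finset ℕ := Finset.range (2 ^ k) with hQ
    -- three classes of additions
    set P0 : Fin m → Prop := fun t =>
      ∃ h : g t, (v (s₁ t h) ∩ Q).Nonempty ∧ (v (s₂ t h) ∩ Q).Nonempty with hP0
    set P1 : Fin m → Prop := fun t => g t ∧ v t ∩ Q = ∅ with hP1
    set Pm : Fin m → Prop := fun t =>
      ∃ h : g t, ((v (s₁ t h) ∩ Q).Nonempty ∧ v (s₂ t h) ∩ Q = ∅) ∨
        (v (s₁ t h) ∩ Q = ∅ ∧ (v (s₂ t h) ∩ Q).Nonempty) with hPm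
    have hsubu : ∀ (t : Fin m) (h : g t), v (s₁ t h) ⊆ v t ∧ v (s₂ t h) ⊆ v t := by
      intro t h
      constructor
      · rw [huni t h]; exact Finset.subset_union_left
      · rw [huni t h]; exact Finset.subset_union_right
    have hinter : ∀ (t : Fin m) (h : g t),
        v t ∩ Q = (v (s₁ t h) ∩ Q) ∪ (v (s₂ t h) ∩ Q) := by
      intro t h
      rw [huni t h, Finset.union_inter_distrib_right]
    -- low-shadow subprogram: counts P0
    have hE0 : k * 2 ^ (k - 1) ≤ (Finset.univ.filter P0).card := by
      apply ih m (fun t => v t ∩ Q) P0 (Finset.univ.filter P0) (fun t => by simp)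
      · rintro t ⟨h, hn1, hn2⟩
        exact ⟨s₁ t h, s₂ t h, hlt1 t h, hlt2 t h, hn1, hn2,
          (hdis t h).mono Finset.inter_subset_left Finset.inter_subset_left, hinter t h⟩
      · intro t hnP
        by_cases hgt : g t
        · by_cases h1 : (v (s₁ t hgt) ∩ Q).Nonempty
          · by_cases h2 : (v (s₂ t hgt) ∩ Q).Nonempty
            · exact absurd ⟨hgt, h1, h2⟩ hnP
            · right; right
              refine ⟨s₁ t hgt, hlt1 t hgt, ?_⟩
              rw [hinter t hgt, Finset.not_nonempty_iff_eq_empty.mp h2, Finset.union_empty]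
          · right; right
            refine ⟨s₂ t hgt, hlt2 t hgt, ?_⟩
            rw [hinter t hgt, Finset.not_nonempty_iff_eq_empty.mp h1, Finset.empty_union]
        · rcases hng t hgt with h | ⟨j, hj⟩ | ⟨s, hs, hvs⟩
          · left; rw [h, Finset.empty_inter]
          · by_cases hjk : j ∈ Q
            · right; left; exact ⟨j, by rw [hj, Finset.singleton_inter_of_mem hjk]⟩
            · left; rw [hj, Finset.singleton_inter_of_notMem hjk]
          · right; right; exact ⟨s, hs, by rw [hvs]⟩
      · intro i hi
        obtain ⟨t, ht⟩ := hout i (by omega)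
        exact ⟨t, by rw [ht, hQ, Aset_inter_low hi]⟩
    -- high-shadow subprogram: counts P1
    have hE1 : k * 2 ^ (k - 1) ≤ (Finset.univ.filter P1).card := by
      apply ih m (fun t => if v t ∩ Q = ∅ then (v t).image (· - 2 ^ k) else ∅) P1
        (Finset.univ.filter P1) (fun t => by simp)
      · rintro t ⟨hgt, hq⟩
        have hemp : ∀ s : Fin m, v s ⊆ v t → v s ∩ Q = ∅ := by
          intro s hs
          rw [Finset.eq_empty_iff_forall_notMem]
          intro x hx
          rw [Finset.mem_inter] at hx
          have hx2 : x ∈ v t ∩ Q := Finset.mem_inter.mpr ⟨hs hx.1, hx.2⟩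
          rw [hq] at hx2
          exact absurd hx2 (Finset.notMem_empty x)
        have hge : ∀ s : Fin m, v s ∩ Q = ∅ → ∀ x ∈ v s, 2 ^ k ≤ x := by
          intro s hsq x hx
          by_contra hlt
          have hx2 : x ∈ v s ∩ Q := Finset.mem_inter.mpr
            ⟨hx, by rw [hQ, Finset.mem_range]; omega⟩
          rw [hsq] at hx2
          exact absurd hx2 (Finset.notMem_empty x)
        have he1 := hemp _ (hsubu t hgt).1
        have he2 := hemp _ (hsubu t hgt).2
        refine ⟨s₁ t hgt, s₂ t hgt, hlt1 t hgt, hlt2 t hgt, ?_, ?_, ?_, ?_⟩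
        · simp only [if_pos he1]
          exact (hne1 t hgt).image _
        · simp only [if_pos he2]
          exact (hne2 t hgt).image _
        · simp only [if_pos he1, if_pos he2]
          rw [Finset.disjoint_left]
          rintro x hx1 hx2
          rw [Finset.mem_image] at hx1 hx2
          obtain ⟨a, ha, rfl⟩ := hx1
          obtain ⟨b, hb, hab⟩ := hx2
          have ha2 := hge _ he1 a ha
          have hb2 := hge _ he2 b hb
          have hab2 : a = b := by omega
          subst hab2
          exact Finset.disjoint_left.mp (hdis t hgt) ha hb
        · simp only [if_pos hq, if_pos he1, if_pos he2]
          rw [huni t hgt, Finset.image_union]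
      · intro t hnP
        by_cases hq : v t ∩ Q = ∅
        · have hgt : ¬ g t := fun h => hnP ⟨h, hq⟩
          rcases hng t hgt with h | ⟨j, hj⟩ | ⟨s, hs, hvs⟩
          · left
            rw [h] at hq ⊢
            simp only [if_pos hq, Finset.image_empty]
          · right; left
            rw [hj] at hq
            exact ⟨j - 2 ^ k, by rw [hj]; simp only [if_pos hq, Finset.image_singleton]⟩
          · right; right
            refine ⟨s, hs, ?_⟩
            simp only [hvs]
        · left; simp only [if_neg hq]
      · intro i hi
        obtain ⟨t, ht⟩ := hout (i + 2 ^ k) (by omega)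
        refine ⟨t, ?_⟩
        have hq0 : v t ∩ Q = ∅ := by rw [ht, hQ, Aset_upper_inter]
        simp only [if_pos hq0]
        rw [ht, Aset_upper_image hi]
    -- mixed additions: descent
    have descent : ∀ N : ℕ, ∀ t0 : Fin m, t0.val < N → ∀ u, u ∈ v t0 → 2 ^ k ≤ u →
        (v t0 ∩ Q).Nonempty → ∃ t, Pm t ∧ u ∈ v t ∧ v t ⊆ v t0 := by
      intro N
      induction N with
      | zero => intro t0 h; omega
      | succ N ihN =>
        intro t0 ht0 u hu hub hq
        by_cases hgt : g t0
        · have hu2 : u ∈ v (s₁ t0 hgt) ∪ v (s₂ t0 hgt) := by rw [← huni t0 hgt]; exact hu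
          rw [Finset.mem_union] at hu2
          rcases hu2 with hu1 | hu1
          · by_cases h1 : (v (s₁ t0 hgt) ∩ Q).Nonempty
            · obtain ⟨t, h3, h4, h5⟩ := ihN (s₁ t0 hgt)
                (by have := Fin.lt_def.mp (hlt1 t0 hgt); omega) u hu1 hub h1
              exact ⟨t, h3, h4, h5.trans (hsubu t0 hgt).1⟩
            · have h1e := Finset.not_nonempty_iff_eq_empty.mp h1
              have h2 : (v (s₂ t0 hgt) ∩ Q).Nonempty := by
                rw [hinter t0 hgt, h1e, Finset.empty_union] at hq
                exact hq
              exact ⟨t0, ⟨hgt, Or.inr ⟨h1e, h2⟩⟩, hu, Finset.Subset.refl _⟩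
          · by_cases h2 : (v (s₂ t0 hgt) ∩ Q).Nonempty
            · obtain ⟨t, h3, h4, h5⟩ := ihN (s₂ t0 hgt)
                (by have := Fin.lt_def.mp (hlt2 t0 hgt); omega) u hu1 hub h2
              exact ⟨t, h3, h4, h5.trans (hsubu t0 hgt).2⟩
            · have h2e := Finset.not_nonempty_iff_eq_empty.mp h2
              have h1 : (v (s₁ t0 hgt) ∩ Q).Nonempty := by
                rw [hinter t0 hgt, h2e, Finset.union_empty] at hq
                exact hq
              exact ⟨t0, ⟨hgt, Or.inl ⟨h1, h2e⟩⟩, hu, Finset.Subset.refl _⟩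
        · rcases hng t0 hgt with h | ⟨j, hj⟩ | ⟨s, hs, hvs⟩
          · rw [h] at hu; exact absurd hu (Finset.notMem_empty u)
          · rw [hj] at hu hq
            rw [Finset.mem_singleton] at hu
            obtain ⟨x, hx⟩ := hq
            rw [Finset.mem_inter, Finset.mem_singleton, hQ, Finset.mem_range] at hx
            omega
          · rw [hvs] at hu hq
            obtain ⟨t, h3, h4, h5⟩ := ihN s (by have := Fin.lt_def.mp hs; omega) u hu hub hq
            exact ⟨t, h3, h4, by rw [hvs]; exact h5⟩
    have hmain : ∀ i : ℕ, ∃ t : Fin m, i < 2 ^ k →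
        Pm t ∧ (i + 2 ^ k) ∈ v t ∧ v t ⊆ Aset (k + 1) i := by
      intro i
      by_cases hi : i < 2 ^ k
      · obtain ⟨t0, ht0⟩ := hout i (by omega)
        have h1 : (i + 2 ^ k) ∈ v t0 := by rw [ht0]; exact upper_mem_Aset hi
        have h2 : (v t0 ∩ Q).Nonempty := by
          refine ⟨i, Finset.mem_inter.mpr ⟨?_, ?_⟩⟩
          · rw [ht0]; exact self_mem_Aset (by omega)
          · rw [hQ, Finset.mem_range]; exact hi
        obtain ⟨t, h3, h4, h5⟩ := descent m t0 t0.isLt (i + 2 ^ k) h1 (by omega) h2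
        exact ⟨t, fun _ => ⟨h3, h4, ht0 ▸ h5⟩⟩
      · obtain ⟨t0, _⟩ := hout 0 (by positivity)
        exact ⟨t0, fun h => absurd h hi⟩
    choose f hf using hmain
    have hEm : 2 ^ k ≤ (Finset.univ.filter Pm).card := by
      rw [← Finset.card_range (2 ^ k)]
      apply Finset.card_le_card_of_injOn f
      · intro i hi
        rw [Finset.mem_coe, Finset.mem_range] at hi
        exact Finset.mem_coe.mpr (Finset.mem_filter.mpr ⟨Finset.mem_univ _, (hf i hi).1⟩)
      · intro i hi i' hi' heq
        rw [Finset.mem_coe, Finset.mem_range] at hi hi'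
        obtain ⟨_, hm1, hs1⟩ := hf i hi
        obtain ⟨_, hm1', hs1'⟩ := hf i' hi'
        rw [← heq] at hm1'
        rw [heq] at hm1
        exact Aset_antisymm hi hi' (hs1 hm1') (hs1' hm1)
    -- combine
    have hgP : ∀ t, (P0 t ∨ P1 t ∨ Pm t) → g t := by
      rintro t (⟨h, _⟩ | ⟨h, _⟩ | ⟨h, _⟩) <;> exact h
    have hd01 : ∀ t, P0 t → P1 t → False := by
      rintro t ⟨h, hn1, _⟩ ⟨hgt, hq⟩
      obtain ⟨x, hx⟩ := hn1
      rw [Finset.mem_inter] at hx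
      have hx2 : x ∈ v t ∩ Q := Finset.mem_inter.mpr ⟨(hsubu t h).1 hx.1, hx.2⟩
      rw [hq] at hx2
      exact absurd hx2 (Finset.notMem_empty x)
    have hd0m : ∀ t, P0 t → Pm t → False := by
      rintro t ⟨h, hn1, hn2⟩ ⟨h', hc⟩
      rcases hc with ⟨_, he⟩ | ⟨he, _⟩
      · exact Finset.not_nonempty_iff_eq_empty.mpr he hn2
      · exact Finset.not_nonempty_iff_eq_empty.mpr he hn1
    have hd1m : ∀ t, P1 t → Pm t → False := by
      rintro t ⟨hgt, hq⟩ ⟨h', hc⟩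
      have hx : (v t ∩ Q).Nonempty := by
        rcases hc with ⟨hn, _⟩ | ⟨_, hn⟩
        · obtain ⟨x, hx⟩ := hn
          rw [Finset.mem_inter] at hx
          exact ⟨x, Finset.mem_inter.mpr ⟨(hsubu t h').1 hx.1, hx.2⟩⟩
        · obtain ⟨x, hx⟩ := hn
          rw [Finset.mem_inter] at hx
          exact ⟨x, Finset.mem_inter.mpr ⟨(hsubu t h').2 hx.1, hx.2⟩⟩
      rw [hq] at hx
      exact Finset.not_nonempty_empty hx
    have hsubG : Finset.univ.filter P0 ∪ Finset.univ.filter P1 ∪ Finset.univ.filter Pm ⊆ G := by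
      intro t ht
      simp only [Finset.mem_union, Finset.mem_filter] at ht
      rw [hG t]
      rcases ht with (⟨_, h⟩ | ⟨_, h⟩) | ⟨_, h⟩
      · exact hgP t (Or.inl h)
      · exact hgP t (Or.inr (Or.inl h))
      · exact hgP t (Or.inr (Or.inr h))
    have hdA : Disjoint (Finset.univ.filter P0) (Finset.univ.filter P1) := by
      rw [Finset.disjoint_left]
      intro t ht1 ht2
      rw [Finset.mem_filter] at ht1 ht2
      exact hd01 t ht1.2 ht2.2
    have hdB : Disjoint (Finset.univ.filter P0 ∪ Finset.univ.filter P1)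
        (Finset.univ.filter Pm) := by
      rw [Finset.disjoint_left]
      intro t ht1 ht2
      rw [Finset.mem_union, Finset.mem_filter, Finset.mem_filter] at ht1
      rw [Finset.mem_filter] at ht2
      rcases ht1 with h | h
      · exact hd0m t h.2 ht2.2
      · exact hd1m t h.2 ht2.2
    have hcard := Finset.card_le_card hsubG
    rw [Finset.card_union_of_disjoint hdB, Finset.card_union_of_disjoint hdA] at hcard
    have harith : (k + 1) * 2 ^ ((k + 1) - 1) ≤
        k * 2 ^ (k - 1) + k * 2 ^ (k - 1) + 2 ^ k := by
      rcases Nat.eq_zero_or_pos k with rfl | hk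
      · simp
      · have h1 : 2 ^ (k - 1) * 2 = 2 ^ k := by
          rw [← pow_succ]
          congr 1
          omega
        simp only [Nat.add_sub_cancel]
        have h2 : (k + 1) * 2 ^ k = k * 2 ^ (k - 1) + k * 2 ^ (k - 1) + 2 ^ k := by
          rw [← h1]; ring
        omega
    calc (k + 1) * 2 ^ ((k + 1) - 1)
        ≤ k * 2 ^ (k - 1) + k * 2 ^ (k - 1) + 2 ^ k := harith
      _ ≤ (Finset.univ.filter P0).card + (Finset.univ.filter P1).card
          + (Finset.univ.filter Pm).card := by
          exact Nat.add_le_add (Nat.add_le_add hE0 hE1) hEm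
      _ ≤ G.card := hcard

/-- Any direct addition-only straight-line program (each computed value is a set of
distinct inputs: either a singleton input `{j}` or the disjoint union of two earlier
values) that outputs every partial sum `a_i = Σ_{j ⪰ i} q_j` (represented by the set
of its addends `{j < 2^n | i &&& j = i}`) uses at least `n·2^(n−1)` additions. -/
theorem stmt_1 (n m : ℕ) (v : Fin m → Finset ℕ) (isAdd : Fin m → Bool)
    (hstep : ∀ t : Fin m,
      if isAdd t then
        ∃ s₁ s₂ : Fin m, s₁ < t ∧ s₂ < t ∧ Disjoint (v s₁) (v s₂) ∧ v t = v s₁ ∪ v s₂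
      else ∃ j < 2 ^ n, v t = {j})
    (houtput : ∀ i < 2 ^ n, ∃ t : Fin m,
      v t = (Finset.range (2 ^ n)).filter (fun j => i &&& j = i)) :
    n * 2 ^ (n - 1) ≤ (Finset.univ.filter (fun t => isAdd t = true)).card := by
  classical
  have hne : ∀ N : ℕ, ∀ t : Fin m, t.val < N → (v t).Nonempty := by
    intro N
    induction N with
    | zero => intro t h; omega
    | succ N ihN =>
      intro t ht
      have hs := hstep t
      by_cases h : isAdd t = true
      · rw [if_pos h] at hs
        obtain ⟨a, b, h1, h2, _, hu⟩ := hs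
        rw [hu]
        exact Finset.Nonempty.mono Finset.subset_union_left
          (ihN a (by have := Fin.lt_def.mp h1; omega))
      · rw [if_neg h] at hs
        obtain ⟨j, _, hj⟩ := hs
        rw [hj]
        exact Finset.singleton_nonempty j
  apply key n m v (fun t => isAdd t = true)
  · intro t
    simp
  · intro t h
    have hs := hstep t
    rw [if_pos h] at hs
    obtain ⟨a, b, h1, h2, hd, hu⟩ := hs
    exact ⟨a, b, h1, h2, hne m a a.isLt, hne m b b.isLt, hd, hu⟩
  · intro t h
    have hs := hstep t
    rw [if_neg h] at hs
    obtain ⟨j, _, hj⟩ := hs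
    exact Or.inr (Or.inl ⟨j, hj⟩)
  · intro i hi
    exact houtput i hi
end

section
/- The divide-and-conquer recursion is correct: if ā_{j'} = Σ_{j'' ⪰ j'} q_{0j''} and ã_{j'} = Σ_{j'' ⪰ j'} q_{1j''} are the partial sums of the lower and upper halves (indices with top bit 0 and 1 respectively), then a_{(1 j')_2} = ã_{j'} and a_{(0 j')_2} = ā_{j'} + ã_{j'}. -/
private lemma sum_split (m : ℕ) (f : ℕ → ℝ) (p : ℕ → Prop) [DecidablePred p] :
    (∑ j ∈ (Finset.range (2 ^ (m + 1))).filter p, f j)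
      = (∑ j ∈ (Finset.range (2 ^ m)).filter p, f j)
        + (∑ j ∈ (Finset.range (2 ^ m)).filter (fun j => p (2 ^ m + j)), f (2 ^ m + j)) := by
  have h : 2 ^ (m + 1) = 2 ^ m + 2 ^ m := by ring
  rw [h, Finset.sum_filter, Finset.sum_filter, Finset.sum_filter, Finset.range_add,
    Finset.sum_union, Finset.sum_map]
  · simp [addLeftEmbedding]
    rfl
  · rw [Finset.disjoint_left]
    intro a ha hb
    simp only [Finset.mem_range] at ha
    simp only [Finset.mem_map, Finset.mem_range, addLeftEmbedding,
      Function.Embedding.coeFn_mk] at hb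
    obtain ⟨x, hx, rfl⟩ := hb
    omega

private lemma tb_add {m x : ℕ} (hx : x < 2 ^ m) (j : ℕ) :
    (2 ^ m + x).testBit j = if j < m then x.testBit j else Nat.testBit 1 (j - m) := by
  have : 2 ^ m + x = 2 ^ m * 1 + x := by ring
  rw [this, Nat.testBit_two_pow_mul_add 1 hx]

private lemma land_lt {x y m : ℕ} (hx : x < 2 ^ m) : x &&& y < 2 ^ m :=
  lt_of_le_of_lt (Nat.and_le_left) hx

private lemma land_hh {m x y : ℕ} (hx : x < 2 ^ m) (hy : y < 2 ^ m) :
    (2 ^ m + x) &&& (2 ^ m + y) = 2 ^ m + (x &&& y) := by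
  apply Nat.eq_of_testBit_eq
  intro j
  rw [Nat.testBit_and, tb_add hx, tb_add hy, tb_add (land_lt hx)]
  split
  · simp
  · cases Nat.testBit 1 (j - m) <;> simp

private lemma land_hl {m x y : ℕ} (hx : x < 2 ^ m) (hy : y < 2 ^ m) :
    (2 ^ m + x) &&& y = x &&& y := by
  apply Nat.eq_of_testBit_eq
  intro j
  rw [Nat.testBit_and, Nat.testBit_and, tb_add hx]
  split
  · rfl
  · rename_i h
    rw [Nat.testBit_lt_two_pow (lt_of_lt_of_le hy (Nat.pow_le_pow_right (by norm_num) (by omega)))]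
    simp

/-- Correctness of the divide-and-conquer recursion: with `a_i = Σ_{j ⪰ i} q_j`
(indices `j < 2^n`, `⪰` bitwise domination) and `ā_{j'}, ã_{j'}` the partial sums of
the top-bit-0 and top-bit-1 halves respectively, we have
`a_{(1 j')₂} = ã_{j'}` and `a_{(0 j')₂} = ā_{j'} + ã_{j'}`. -/
theorem stmt_15 (n : ℕ) (hn : 1 ≤ n) (q : ℕ → ℝ) (j' : ℕ) (hj' : j' < 2 ^ (n - 1)) :
    (∑ j ∈ (Finset.range (2 ^ n)).filter
        (fun j => (2 ^ (n - 1) + j') &&& j = 2 ^ (n - 1) + j'), q j)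
      = (∑ j'' ∈ (Finset.range (2 ^ (n - 1))).filter (fun j'' => j' &&& j'' = j'),
          q (2 ^ (n - 1) + j'')) ∧
    (∑ j ∈ (Finset.range (2 ^ n)).filter (fun j => j' &&& j = j'), q j)
      = (∑ j'' ∈ (Finset.range (2 ^ (n - 1))).filter (fun j'' => j' &&& j'' = j'), q j'')
        + (∑ j'' ∈ (Finset.range (2 ^ (n - 1))).filter (fun j'' => j' &&& j'' = j'),
            q (2 ^ (n - 1) + j'')) := by
  set m := n - 1 with hm
  have hn' : n = m + 1 := by omega
  rw [hn']
  constructor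
  · rw [sum_split]
    have h1 : ∀ j ∈ Finset.range (2 ^ m), ¬ ((2 ^ m + j') &&& j = 2 ^ m + j') := by
      intro j hj
      simp only [Finset.mem_range] at hj
      rw [land_hl hj' hj]
      have := land_lt (y := j) hj'
      omega
    rw [Finset.filter_false_of_mem h1, Finset.sum_empty, zero_add]
    congr 1
    apply Finset.filter_congr
    intro j hj
    simp only [Finset.mem_range] at hj
    rw [land_hh hj' hj]
    constructor <;> intro h
    · omega
    · omega
  · rw [sum_split]
    congr 1
    refine Finset.sum_congr ?_ (fun _ _ => rfl)
    apply Finset.filter_congr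
    intro j hj
    simp only [Finset.mem_range] at hj
    rw [Nat.land_comm, land_hl hj hj', Nat.land_comm]
end
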